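/- Let A be a finite-dimensional algebra with id_A A ≤ 1, M a cluster tilting object in Sub A, Γ = End_A(M), F = Hom_A(–, M) and G = Hom_Γ(–, M). Then for every X ∈ Sub A the natural evaluation map X → G(F(X)) = Hom_Γ(Hom_A(X, M), M) is an isomorphism. -/

import Mathlib

/-!
STATEMENT 16. Let A be a finite-dimensional algebra with id_A A ≤ 1, M a cluster tilting
object in Sub A, Γ = End_A(M), F = Hom_A(–, M) and G = Hom_Γ(–, M).  Then for every
X ∈ Sub A, the natural evaluation map X → G(F(X)) = Hom_Γ(Hom_A(X, M), M) is an
isomorphism.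
-/

def Ext1Zero (A : Type) [Ring A] (Z X : Type) [AddCommGroup Z] [Module A Z]
    [AddCommGroup X] [Module A X] : Prop :=
  ∀ (E : Type) [AddCommGroup E] [Module A E] (f : X →ₗ[A] E) (g : E →ₗ[A] Z),
    Function.Injective f → Function.Surjective g → LinearMap.range f = LinearMap.ker g →
    ∃ s : Z →ₗ[A] E, g ∘ₗ s = LinearMap.id

def InSub (A : Type) [Ring A] (X : Type) [AddCommGroup X] [Module A X] : Prop :=
  ∃ (n : ℕ) (f : X →ₗ[A] (Fin n → A)), Function.Injective f

def InAdd (A : Type) [Ring A] (M X : Type) [AddCommGroup M] [Module A M]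
    [AddCommGroup X] [Module A X] : Prop :=
  ∃ (n : ℕ) (s : X →ₗ[A] (Fin n → M)) (r : (Fin n → M) →ₗ[A] X), r ∘ₗ s = LinearMap.id

def IsClusterTilting (A : Type) [Ring A] (M : Type) [AddCommGroup M] [Module A M] : Prop :=
  InSub A M ∧
  ∀ (X : Type) [AddCommGroup X] [Module A X], InSub A X →
    ((Ext1Zero A M X ↔ InAdd A M X) ∧ (Ext1Zero A X M ↔ InAdd A M X))

def InjDimLE1 (A : Type) [Ring A] : Prop :=
  ∃ (I₀ : ModuleCat.{0} A) (ι : A →ₗ[A] I₀), Module.Injective A I₀ ∧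
    Function.Injective ι ∧ Module.Injective A (I₀ ⧸ LinearMap.range ι)

/-- The evaluation map `X → Hom_Γ(Hom_A(X, M), M)`, `x ↦ (φ ↦ φ x)`. -/
def evMap (A : Type) [Ring A] (M : Type) [AddCommGroup M] [Module A M]
    (X : Type) [AddCommGroup X] [Module A X] :
    X →ₗ[A] ((X →ₗ[A] M) →ₗ[Module.End A M] M) where
  toFun x :=
    { toFun := fun φ => φ x
      map_add' := fun _ _ => rfl
      map_smul' := fun _ _ => rfl }
  map_add' x y := LinearMap.ext fun φ => φ.map_add x y
  map_smul' a x := LinearMap.ext fun φ => φ.map_smul a x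

namespace EvalIso

variable {A : Type} [Ring A]

noncomputable def invComp {U V W : Type} [AddCommGroup U] [Module A U] [AddCommGroup V]
    [Module A V] [AddCommGroup W] [Module A W] (f : V →ₗ[A] W) (hf : Function.Injective f)
    (h : U →ₗ[A] W) (hr : ∀ u, h u ∈ LinearMap.range f) : U →ₗ[A] V :=
  (LinearEquiv.ofInjective f hf).symm.toLinearMap ∘ₗ h.codRestrict (LinearMap.range f) hr

lemma invComp_spec {U V W : Type} [AddCommGroup U] [Module A U] [AddCommGroup V]
    [Module A V] [AddCommGroup W] [Module A W] (f : V →ₗ[A] W) (hf : Function.Injective f)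
    (h : U →ₗ[A] W) (hr : ∀ u, h u ∈ LinearMap.range f) (u : U) :
    f (invComp f hf h hr u) = h u := by
  have key : ∀ x : LinearMap.range f, f ((LinearEquiv.ofInjective f hf).symm x) = (x : W) := by
    intro x
    conv_rhs => rw [← (LinearEquiv.ofInjective f hf).apply_symm_apply x]
    rfl
  simpa [invComp] using key ⟨h u, hr u⟩

lemma mkQ_eq {E : Type} [AddCommGroup E] [Module A E] {p : Submodule A E} {x y : E}
    (h : x - y ∈ p) : p.mkQ x = p.mkQ y := by
  rw [Submodule.mkQ_apply, Submodule.mkQ_apply, Submodule.Quotient.eq]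
  exact h

lemma sub_mem_of_mkQ_eq {E : Type} [AddCommGroup E] [Module A E] {p : Submodule A E} {x y : E}
    (h : p.mkQ x = p.mkQ y) : x - y ∈ p := by
  rw [Submodule.mkQ_apply, Submodule.mkQ_apply, Submodule.Quotient.eq] at h
  exact h

lemma ext1Zero_pi_left {Z X : Type} [AddCommGroup Z] [Module A Z] [AddCommGroup X] [Module A X]
    (n : ℕ) (h : Ext1Zero A Z X) : Ext1Zero A (Fin n → Z) X := by
  classical
  intro E _ _ f g hf hg hfg
  set sing : (i : Fin n) → Z →ₗ[A] (Fin n → Z) :=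
    fun i => LinearMap.single A (fun _ => Z) i with hsing
  set Ei : (i : Fin n) → Submodule A E :=
    fun i => Submodule.comap g (LinearMap.range (sing i)) with hEi
  have hfmem : ∀ (i : Fin n) (x : X), f x ∈ Ei i := by
    intro i x
    have : f x ∈ LinearMap.ker g := hfg ▸ LinearMap.mem_range_self f x
    simp only [hEi, Submodule.mem_comap]
    rw [LinearMap.mem_ker.mp this]
    exact Submodule.zero_mem _
  set fi : (i : Fin n) → (X →ₗ[A] Ei i) :=
    fun i => f.codRestrict (Ei i) (hfmem i) with hfi
  set gi : (i : Fin n) → (Ei i →ₗ[A] Z) :=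
    fun i => (LinearMap.proj i) ∘ₗ g ∘ₗ (Ei i).subtype with hgi
  have hfi_inj : ∀ i, Function.Injective (fi i) := by
    intro i a b hab
    exact hf (congrArg Subtype.val hab)
  have hgi_surj : ∀ i, Function.Surjective (gi i) := by
    intro i z
    obtain ⟨e, he⟩ := hg (Pi.single i z)
    have hmem : e ∈ Ei i := by
      have : g e ∈ LinearMap.range (sing i) := ⟨z, by rw [he]; rfl⟩
      exact this
    refine ⟨⟨e, hmem⟩, ?_⟩
    have hcalc : (gi i) ⟨e, hmem⟩ = g e i := rfl
    rw [hcalc, he]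
    exact Pi.single_eq_same (M := fun _ => Z) i z
  have hrk : ∀ i, LinearMap.range (fi i) = LinearMap.ker (gi i) := by
    intro i
    ext ⟨e, he⟩
    constructor
    · rintro ⟨x, hx⟩
      have hx' : f x = e := congrArg Subtype.val hx
      have : g e = 0 := by
        rw [← hx']
        exact LinearMap.mem_ker.mp (hfg ▸ LinearMap.mem_range_self f x)
      simp only [LinearMap.mem_ker, hgi, LinearMap.comp_apply, Submodule.subtype_apply,
        LinearMap.proj_apply, this, Pi.zero_apply]
    · intro hker
      have hgei : g e i = 0 := hker
      obtain ⟨z₀, hz₀⟩ : g e ∈ LinearMap.range (sing i) := he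
      have hz0 : Pi.single i z₀ = g e := hz₀
      have : z₀ = 0 := by
        have := congrFun hz0 i
        rw [Pi.single_eq_same] at this
        rw [this, hgei]
      have hge : g e = 0 := by rw [← hz0, this, Pi.single_zero]
      obtain ⟨x, hx⟩ : e ∈ LinearMap.range f := by rw [hfg]; exact hge
      exact ⟨x, Subtype.ext hx⟩
  choose σ hσ using fun i => h (Ei i) (fi i) (gi i) (hfi_inj i) (hgi_surj i) (hrk i)
  refine ⟨∑ i, (Ei i).subtype ∘ₗ (σ i) ∘ₗ LinearMap.proj i, ?_⟩
  refine LinearMap.ext fun v => ?_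
  have hkey : ∀ (i : Fin n) (z : Z), g ((σ i z : Ei i) : E) = Pi.single i z := by
    intro i z
    obtain ⟨w, hw⟩ : g ((σ i z : Ei i) : E) ∈ LinearMap.range (sing i) := (σ i z).2
    have hgi_eval : g ((σ i z : Ei i) : E) i = z := by
      have := congrArg (fun (t : Z →ₗ[A] Z) => t z) (hσ i)
      simpa [hgi] using this
    have hw' : Pi.single i w = g ((σ i z : Ei i) : E) := hw
    have : w = z := by
      have := congrFun hw' i
      rw [Pi.single_eq_same] at this
      rw [this, hgi_eval]
    rw [← hw', this]
  simp only [LinearMap.comp_apply, LinearMap.id_apply, LinearMap.coe_sum, Finset.sum_apply,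
    map_sum, Submodule.subtype_apply, LinearMap.proj_apply]
  calc (∑ i, g ((σ i (v i) : Ei i) : E)) = ∑ i, Pi.single i (v i) := by
        exact Finset.sum_congr rfl fun i _ => hkey i (v i)
    _ = v := Finset.univ_sum_single v

lemma ext1Zero_pi_right {Z X : Type} [AddCommGroup Z] [Module A Z] [AddCommGroup X] [Module A X]
    (n : ℕ) (h : Ext1Zero A Z X) : Ext1Zero A Z (Fin n → X) := by
  classical
  intro E _ _ f g hf hg hfg
  set Wi : (i : Fin n) → Submodule A E :=
    fun i => Submodule.map f (LinearMap.ker (LinearMap.proj i : (Fin n → X) →ₗ[A] X)) with hWi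
  have hWle : ∀ i, Wi i ≤ LinearMap.ker g := by
    intro i
    refine le_trans ?_ (le_of_eq hfg)
    exact LinearMap.map_le_range
  set gbar : (i : Fin n) → (E ⧸ Wi i) →ₗ[A] Z := fun i => (Wi i).liftQ g (hWle i) with hgbar
  set fbar : (i : Fin n) → (X →ₗ[A] (E ⧸ Wi i)) :=
    fun i => (Wi i).mkQ ∘ₗ f ∘ₗ LinearMap.single A (fun _ => X) i with hfbar
  have hfbar_inj : ∀ i, Function.Injective (fbar i) := by
    intro i a b hab
    have : f (Pi.single i a) - f (Pi.single i b) ∈ Wi i := sub_mem_of_mkQ_eq hab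
    rw [← map_sub] at this
    obtain ⟨v, hv, hfv⟩ := this
    have hveq : v = Pi.single i a - Pi.single i b := hf hfv
    have : (Pi.single i a - Pi.single i b : Fin n → X) i = 0 := by
      rw [← hveq]; exact hv
    simpa [Pi.single_eq_same] using sub_eq_zero.mp (by simpa using this)
  have hgbar_surj : ∀ i, Function.Surjective (gbar i) := by
    intro i z
    obtain ⟨e, he⟩ := hg z
    exact ⟨(Wi i).mkQ e, by simpa [hgbar] using he⟩
  have hrk : ∀ i, LinearMap.range (fbar i) = LinearMap.ker (gbar i) := by
    intro i
    ext q
    induction q using Submodule.Quotient.induction_on with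
    | H e =>
      constructor
      · rintro ⟨x, hx⟩
        have : gbar i (fbar i x) = 0 := by
          have : f (Pi.single i x) ∈ LinearMap.ker g := hfg ▸ LinearMap.mem_range_self f _
          simpa [hgbar, hfbar] using this
        rw [hx] at this
        exact this
      · intro hker
        have hge : g e = 0 := by simpa [hgbar] using hker
        obtain ⟨v, hv⟩ : e ∈ LinearMap.range f := hfg ▸ hge
        refine ⟨v i, ?_⟩
        have hsplit : f v - f (Pi.single i (v i)) ∈ Wi i := by
          rw [← map_sub]
          refine ⟨v - Pi.single i (v i), ?_, rfl⟩
          simp [LinearMap.mem_ker, Pi.single_eq_same]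
        have : (Wi i).mkQ (f (Pi.single i (v i))) = (Wi i).mkQ (f v) := by
          refine mkQ_eq ?_
          simpa using (Wi i).neg_mem hsplit
        rw [hfbar]
        simpa [this, hv] using rfl
  choose σ hσ using fun i => h (E ⧸ Wi i) (fbar i) (gbar i) (hfbar_inj i) (hgbar_surj i) (hrk i)
  have key : ∀ z : Z, ∃ e : E, g e = z ∧ ∀ i, (Wi i).mkQ e = σ i z := by
    intro z
    obtain ⟨e₀, he₀⟩ := hg z
    have hker : ∀ i, σ i z - (Wi i).mkQ e₀ ∈ LinearMap.ker (gbar i) := by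
      intro i
      have h1 : gbar i (σ i z) = z := by
        have := congrArg (fun (t : Z →ₗ[A] Z) => t z) (hσ i)
        simpa using this
      rw [LinearMap.mem_ker, map_sub, h1]; simp [hgbar, he₀]
    have hmem : ∀ i, σ i z - (Wi i).mkQ e₀ ∈ LinearMap.range (fbar i) := by
      intro i; rw [hrk i]; exact hker i
    choose xs hxs using fun i => hmem i
    have hz0 : ∀ w : Fin n → X, g (f w) = 0 := fun w =>
      LinearMap.mem_ker.mp (hfg ▸ LinearMap.mem_range_self f w)
    refine ⟨e₀ + f (fun i => xs i), by rw [map_add, hz0, add_zero, he₀], ?_⟩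
    intro i
    have hsplit : f (fun j => xs j) - f (Pi.single i (xs i)) ∈ Wi i := by
      rw [← map_sub]
      refine ⟨(fun j => xs j) - Pi.single i (xs i), ?_, rfl⟩
      simp [LinearMap.mem_ker, Pi.single_eq_same]
    have h2 : (Wi i).mkQ (f (fun j => xs j)) = (Wi i).mkQ (f (Pi.single i (xs i))) :=
      mkQ_eq hsplit
    have h3 : (Wi i).mkQ (f (Pi.single i (xs i))) = fbar i (xs i) := rfl
    rw [map_add, h2, h3, hxs i]
    abel
  have uniq : ∀ e e' : E, g e = g e' → (∀ i, (Wi i).mkQ e = (Wi i).mkQ e') → e = e' := by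
    intro e e' h1 h2
    have hge : g (e - e') = 0 := by rw [map_sub, h1, sub_self]
    obtain ⟨v, hv⟩ : e - e' ∈ LinearMap.range f := hfg ▸ hge
    have hvi : ∀ i, v i = 0 := by
      intro i
      have hmm : e - e' ∈ Wi i := sub_mem_of_mkQ_eq (h2 i)
      obtain ⟨w, hw, hfw⟩ := hmm
      have hwv : w = v := hf (by rw [hfw, hv])
      rw [← hwv]
      exact hw
    have : v = 0 := funext hvi
    have : e - e' = 0 := by rw [← hv, this, map_zero]
    exact sub_eq_zero.mp this
  choose sf hsf using key
  have hadd : ∀ z z', sf (z + z') = sf z + sf z' := by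
    intro z z'
    refine uniq _ _ ?_ ?_
    · rw [(hsf (z + z')).1, map_add, (hsf z).1, (hsf z').1]
    · intro i
      calc (Wi i).mkQ (sf (z + z')) = σ i (z + z') := (hsf (z + z')).2 i
        _ = σ i z + σ i z' := map_add _ _ _
        _ = (Wi i).mkQ (sf z) + (Wi i).mkQ (sf z') := by rw [(hsf z).2 i, (hsf z').2 i]
        _ = (Wi i).mkQ (sf z + sf z') := (map_add _ _ _).symm
  have hsmul : ∀ (a : A) z, sf (a • z) = a • sf z := by
    intro a z
    refine uniq _ _ ?_ ?_
    · rw [(hsf (a • z)).1, map_smul, (hsf z).1]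
    · intro i
      calc (Wi i).mkQ (sf (a • z)) = σ i (a • z) := (hsf (a • z)).2 i
        _ = a • σ i z := map_smul _ _ _
        _ = a • (Wi i).mkQ (sf z) := by rw [(hsf z).2 i]
        _ = (Wi i).mkQ (a • sf z) := (map_smul _ _ _).symm
  refine ⟨⟨⟨sf, hadd⟩, hsmul⟩, ?_⟩
  refine LinearMap.ext fun z => ?_
  exact (hsf z).1

lemma ext1Zero_retract_right {Z Y Y' : Type} [AddCommGroup Z] [Module A Z] [AddCommGroup Y]
    [Module A Y] [AddCommGroup Y'] [Module A Y'] (h : Ext1Zero A Z Y')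
    (s : Y →ₗ[A] Y') (r : Y' →ₗ[A] Y) (hrs : r ∘ₗ s = LinearMap.id) :
    Ext1Zero A Z Y := by
  intro E _ _ f g hf hg hfg
  set p : Y →ₗ[A] Y' × E := s.prod (-f) with hp
  set T : Submodule A (Y' × E) := LinearMap.range p with hT
  set j₁ : Y' →ₗ[A] ((Y' × E) ⧸ T) := T.mkQ ∘ₗ LinearMap.inl A Y' E with hj₁
  set j₂ : E →ₗ[A] ((Y' × E) ⧸ T) := T.mkQ ∘ₗ LinearMap.inr A Y' E with hj₂
  have hTle : T ≤ LinearMap.ker (g ∘ₗ LinearMap.snd A Y' E) := by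
    rintro ⟨w, e⟩ ⟨y, hy⟩
    have h1 : -f y = e := congrArg Prod.snd hy
    have h2 : g (f y) = 0 := LinearMap.mem_ker.mp (hfg ▸ LinearMap.mem_range_self f y)
    simp only [LinearMap.mem_ker, LinearMap.comp_apply, LinearMap.snd_apply]
    rw [← h1, map_neg, h2, neg_zero]
  set gbar : ((Y' × E) ⧸ T) →ₗ[A] Z := T.liftQ (g ∘ₗ LinearMap.snd A Y' E) hTle with hgbar
  have hj₁_inj : Function.Injective j₁ := by
    intro w w' hww
    have hww' : T.mkQ ((w : Y'), (0 : E)) = T.mkQ (w', 0) := hww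
    have hmm : ((w : Y'), (0 : E)) - (w', 0) ∈ T := sub_mem_of_mkQ_eq hww'
    have : (w - w', (0 : E)) ∈ T := by
      simpa [Prod.ext_iff, sub_zero] using hmm
    obtain ⟨y, hy⟩ := this
    have h1 : -f y = 0 := congrArg Prod.snd hy
    have hy0 : y = 0 := hf (by simpa using h1)
    have h2 : s y = w - w' := congrArg Prod.fst hy
    rw [hy0, map_zero] at h2
    exact sub_eq_zero.mp h2.symm
  have hgbar_surj : Function.Surjective gbar := by
    intro z
    obtain ⟨e, he⟩ := hg z
    exact ⟨T.mkQ (0, e), by simpa [hgbar] using he⟩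
  have hrange : LinearMap.range j₁ = LinearMap.ker gbar := by
    ext q
    induction q using Submodule.Quotient.induction_on with
    | H we =>
      obtain ⟨w, e⟩ := we
      constructor
      · rintro ⟨w', hw'⟩
        have hww' : T.mkQ ((w' : Y'), (0 : E)) = T.mkQ (w, e) := hw'
        have hmm : ((w' : Y'), (0 : E)) - (w, e) ∈ T := sub_mem_of_mkQ_eq hww'
        obtain ⟨y, hy⟩ := hmm
        have hsnd : -f y = 0 - e := congrArg Prod.snd hy
        have hfe : e = f y := by
          have := hsnd
          simp only [zero_sub] at this
          exact (neg_injective this).symm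
        have hge : g e = 0 := by
          rw [hfe]
          exact LinearMap.mem_ker.mp (hfg ▸ LinearMap.mem_range_self f y)
        show gbar (Submodule.Quotient.mk (w, e)) = 0
        simpa [hgbar] using hge
      · intro hker
        have hge : g e = 0 := by simpa [hgbar] using hker
        obtain ⟨y, hy⟩ : e ∈ LinearMap.range f := hfg ▸ hge
        refine ⟨w + s y, ?_⟩
        show T.mkQ (w + s y, (0:E)) = Submodule.Quotient.mk (w, e)
        have hstep : T.mkQ (w + s y, (0:E)) = T.mkQ (w, e) := by
          refine mkQ_eq ⟨y, ?_⟩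
          have hdiff : (w + s y, (0:E)) - (w, e) = (s y, -e) := by
            rw [Prod.mk_sub_mk]
            simp
          rw [hdiff, ← hy]
          rfl
        simpa using hstep
  obtain ⟨σbar, hσbar⟩ := h ((Y' × E) ⧸ T) j₁ gbar hj₁_inj hgbar_surj hrange
  have hρle : T ≤ LinearMap.ker ((f ∘ₗ r ∘ₗ LinearMap.fst A Y' E) + LinearMap.snd A Y' E) := by
    rintro ⟨w, e⟩ ⟨y, hy⟩
    have h1 : s y = w := congrArg Prod.fst hy
    have h2 : -f y = e := congrArg Prod.snd hy
    have h3 : r (s y) = y := by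
      have := congrArg (fun (t : Y →ₗ[A] Y) => t y) hrs
      simpa using this
    simp only [LinearMap.mem_ker, LinearMap.add_apply, LinearMap.comp_apply,
      LinearMap.fst_apply, LinearMap.snd_apply]
    rw [← h1, ← h2, h3]
    abel
  set ρ : ((Y' × E) ⧸ T) →ₗ[A] E :=
    T.liftQ ((f ∘ₗ r ∘ₗ LinearMap.fst A Y' E) + LinearMap.snd A Y' E) hρle with hρ
  refine ⟨ρ ∘ₗ σbar, ?_⟩
  refine LinearMap.ext fun z => ?_
  have h1 : gbar (σbar z) = z := by
    have := congrArg (fun (t : Z →ₗ[A] Z) => t z) hσbar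
    simpa using this
  have h2 : ∀ q : (Y' × E) ⧸ T, g (ρ q) = gbar q := by
    intro q
    induction q using Submodule.Quotient.induction_on with
    | H we =>
      obtain ⟨w, e⟩ := we
      have hgf : g (f (r w)) = 0 := LinearMap.mem_ker.mp (hfg ▸ LinearMap.mem_range_self f _)
      simp [hρ, hgbar, hgf]
  simp only [LinearMap.comp_apply, LinearMap.id_apply]
  rw [h2, h1]

lemma ext1Zero_free {X : Type} [AddCommGroup X] [Module A X] : Ext1Zero A A X := by
  intro E _ _ f g hf hg hfg
  obtain ⟨e₀, he₀⟩ := hg 1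
  refine ⟨⟨⟨fun a => a • e₀, fun a b => add_smul a b e₀⟩, fun a b => mul_smul a b e₀⟩, ?_⟩
  refine LinearMap.ext fun a => ?_
  simp only [LinearMap.comp_apply, LinearMap.coe_mk, AddHom.coe_mk, LinearMap.id_apply,
    map_smul, he₀, smul_eq_mul, mul_one]

lemma ext1Zero_of_inAdd {Z M Y : Type} [AddCommGroup Z] [Module A Z] [AddCommGroup M]
    [Module A M] [AddCommGroup Y] [Module A Y] (h : Ext1Zero A Z M) (hY : InAdd A M Y) :
    Ext1Zero A Z Y := by
  obtain ⟨n, s, r, hrs⟩ := hY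
  exact ext1Zero_retract_right (ext1Zero_pi_right n h) s r hrs

lemma ext1Zero_quot {X' P Y : Type} [AddCommGroup X'] [Module A X'] [AddCommGroup P]
    [Module A P] [AddCommGroup Y] [Module A Y] (ι : X' →ₗ[A] P)
    (hEP : ∀ φ : X' →ₗ[A] Y, ∃ Ψ : P →ₗ[A] Y, Ψ ∘ₗ ι = φ)
    (hP : Ext1Zero A P Y) : Ext1Zero A (P ⧸ LinearMap.range ι) Y := by
  intro E _ _ f g hf hg hfg
  set D : Submodule A (P × E) :=
    LinearMap.ker (((LinearMap.range ι).mkQ ∘ₗ LinearMap.fst A P E) - (g ∘ₗ LinearMap.snd A P E)) with hD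
  set g' : D →ₗ[A] P := LinearMap.fst A P E ∘ₗ D.subtype with hg'
  have hmemD : ∀ pe : P × E, pe ∈ D ↔ (LinearMap.range ι).mkQ pe.1 = g pe.2 := by
    intro pe
    simp [hD, LinearMap.mem_ker, sub_eq_zero]
  have hf'mem : ∀ y : Y, ((0 : P), f y) ∈ D := by
    intro y
    rw [hmemD]
    have : g (f y) = 0 := LinearMap.mem_ker.mp (hfg ▸ LinearMap.mem_range_self f y)
    simp [this]
  set f' : Y →ₗ[A] D :=
    ((LinearMap.inr A P E) ∘ₗ f).codRestrict D hf'mem with hf'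
  have hf'_inj : Function.Injective f' := by
    intro a b hab
    have := congrArg (fun t : D => (t : P × E).2) hab
    exact hf this
  have hg'_surj : Function.Surjective g' := by
    intro p
    obtain ⟨e, he⟩ := hg ((LinearMap.range ι).mkQ p)
    exact ⟨⟨(p, e), (hmemD _).mpr he.symm⟩, rfl⟩
  have hrange' : LinearMap.range f' = LinearMap.ker g' := by
    ext ⟨⟨p, e⟩, hpe⟩
    constructor
    · rintro ⟨y, hy⟩
      have h1 : ((0 : P), f y) = (p, e) := congrArg Subtype.val hy
      have : (0 : P) = p := congrArg Prod.fst h1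
      simp [hg', LinearMap.mem_ker, ← this]
    · intro hker
      have hp0 : p = 0 := hker
      have : g e = 0 := by
        have := (hmemD (p, e)).mp hpe
        rw [hp0] at this
        simpa using this.symm
      obtain ⟨y, hy⟩ : e ∈ LinearMap.range f := hfg ▸ this
      refine ⟨y, ?_⟩
      apply Subtype.ext
      simp only [hf', LinearMap.codRestrict_apply, LinearMap.comp_apply, LinearMap.inr_apply]
      show ((0 : P), f y) = _; simp [hp0, hy]
  obtain ⟨s', hs'⟩ := hP D f' g' hf'_inj hg'_surj hrange'
  set L : P →ₗ[A] E := LinearMap.snd A P E ∘ₗ D.subtype ∘ₗ s' with hL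
  have hgL : ∀ p, g (L p) = (LinearMap.range ι).mkQ p := by
    intro p
    have hmem := (s' p).2
    rw [hmemD] at hmem
    have hfst : ((s' p : P × E)).1 = p := by
      have := congrArg (fun (t : P →ₗ[A] P) => t p) hs'
      simpa [hg'] using this
    rw [hL]
    simp only [LinearMap.comp_apply, LinearMap.snd_apply, Submodule.subtype_apply]
    rw [← hmem, hfst]
  have hLι : ∀ x, L (ι x) ∈ LinearMap.range f := by
    intro x
    rw [hfg, LinearMap.mem_ker, hgL]
    exact (Submodule.Quotient.mk_eq_zero (LinearMap.range ι)).mpr (LinearMap.mem_range_self ι x)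
  obtain ⟨Ψ, hΨ⟩ := hEP (invComp f hf (L ∘ₗ ι) hLι)
  set L' : P →ₗ[A] E := L - f ∘ₗ Ψ with hL'
  have hL'le : LinearMap.range ι ≤ LinearMap.ker L' := by
    rintro _ ⟨x, rfl⟩
    have h1 : Ψ (ι x) = invComp f hf (L ∘ₗ ι) hLι x := by
      have := congrArg (fun (t : X' →ₗ[A] Y) => t x) hΨ
      simpa using this
    simp only [LinearMap.mem_ker, hL', LinearMap.sub_apply, LinearMap.comp_apply, h1]
    rw [invComp_spec]
    simp
  refine ⟨(LinearMap.range ι).liftQ L' hL'le, ?_⟩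
  refine LinearMap.ext fun q => ?_
  induction q using Submodule.Quotient.induction_on with
  | H p =>
    have : g (L' p) = (LinearMap.range ι).mkQ p := by
      have hgf : g (f (Ψ p)) = 0 := LinearMap.mem_ker.mp (hfg ▸ LinearMap.mem_range_self f _)
      simp [hL', hgL, hgf]
    simpa using this

lemma ext1Zero_lift {T V Q' : Type} [AddCommGroup T] [Module A T] [AddCommGroup V] [Module A V]
    [AddCommGroup Q'] [Module A Q'] (π : V →ₗ[A] Q') (hπ : Function.Surjective π)
    (h : Ext1Zero A T (LinearMap.ker π)) (G : T →ₗ[A] Q') :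
    ∃ hm : T →ₗ[A] V, π ∘ₗ hm = G := by
  set D : Submodule A (T × V) :=
    LinearMap.ker ((G ∘ₗ LinearMap.fst A T V) - (π ∘ₗ LinearMap.snd A T V)) with hD
  have hmemD : ∀ tv : T × V, tv ∈ D ↔ G tv.1 = π tv.2 := by
    intro tv
    simp [hD, LinearMap.mem_ker, sub_eq_zero]
  set g' : D →ₗ[A] T := LinearMap.fst A T V ∘ₗ D.subtype with hg'
  have hf'mem : ∀ x : LinearMap.ker π, ((0 : T), (x : V)) ∈ D := by
    intro x
    rw [hmemD]
    simp [LinearMap.mem_ker.mp x.2]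
  set f' : (LinearMap.ker π) →ₗ[A] D :=
    ((LinearMap.inr A T V) ∘ₗ (LinearMap.ker π).subtype).codRestrict D hf'mem with hf'
  have hf'_inj : Function.Injective f' := by
    intro a b hab
    have := congrArg (fun t : D => (t : T × V).2) hab
    exact Subtype.ext this
  have hg'_surj : Function.Surjective g' := by
    intro t
    obtain ⟨v, hv⟩ := hπ (G t)
    exact ⟨⟨(t, v), (hmemD _).mpr hv.symm⟩, rfl⟩
  have hrange' : LinearMap.range f' = LinearMap.ker g' := by
    ext ⟨⟨t, v⟩, htv⟩
    constructor
    · rintro ⟨x, hx⟩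
      have h1 : ((0 : T), (x : V)) = (t, v) := congrArg Subtype.val hx
      have : (0 : T) = t := congrArg Prod.fst h1
      simp [hg', LinearMap.mem_ker, ← this]
    · intro hker
      have ht0 : t = 0 := hker
      have hv : v ∈ LinearMap.ker π := by
        rw [LinearMap.mem_ker]
        have := (hmemD (t, v)).mp htv
        rw [ht0] at this
        simpa using this.symm
      refine ⟨⟨v, hv⟩, ?_⟩
      apply Subtype.ext
      show ((0 : T), v) = _
      subst ht0; rfl
  obtain ⟨s', hs'⟩ := h D f' g' hf'_inj hg'_surj hrange'
  refine ⟨LinearMap.snd A T V ∘ₗ D.subtype ∘ₗ s', ?_⟩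
  refine LinearMap.ext fun t => ?_
  have hmem := (s' t).2
  rw [hmemD] at hmem
  have hfst : ((s' t : T × V)).1 = t := by
    have := congrArg (fun (u : T →ₗ[A] T) => u t) hs'
    simpa [hg'] using this
  simp only [LinearMap.comp_apply, LinearMap.snd_apply, Submodule.subtype_apply]
  rw [← hmem, hfst]

section Duality

variable (k : Type) [Field k] (A : Type) [Ring A] [Algebra k A]

/-- the k-dual of A as a left A-module -/
structure QA : Type where
  f : A →ₗ[k] k

namespace QA

variable {k A}

@[ext] lemma ext {q q' : QA k A} (h : q.f = q'.f) : q = q' := by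
  cases q; cases q'; cases h; rfl

instance : Add (QA k A) := ⟨fun q q' => ⟨q.f + q'.f⟩⟩
instance : Zero (QA k A) := ⟨⟨0⟩⟩
instance : Neg (QA k A) := ⟨fun q => ⟨-q.f⟩⟩
instance : Sub (QA k A) := ⟨fun q q' => ⟨q.f - q'.f⟩⟩

@[simp] lemma add_f (q q' : QA k A) : (q + q').f = q.f + q'.f := rfl
@[simp] lemma zero_f : (0 : QA k A).f = 0 := rfl
@[simp] lemma neg_f (q : QA k A) : (-q).f = -q.f := rfl
@[simp] lemma sub_f (q q' : QA k A) : (q - q').f = q.f - q'.f := rfl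

instance : AddCommGroup (QA k A) where
  add_assoc a b c := by ext x; simp [add_assoc]
  zero_add a := by ext x; simp
  add_zero a := by ext x; simp
  add_comm a b := by ext x; simp [add_comm]
  neg_add_cancel a := by ext x; simp
  sub_eq_add_neg a b := by ext x; simp [sub_eq_add_neg]
  nsmul := nsmulRec
  zsmul := zsmulRec

instance : SMul A (QA k A) := ⟨fun a q => ⟨q.f ∘ₗ LinearMap.mulRight k a⟩⟩

@[simp] lemma smul_f (a : A) (q : QA k A) (x : A) : (a • q).f x = q.f (x * a) := rfl

instance : Module A (QA k A) where
  one_smul q := by ext x; simp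
  mul_smul a b q := by ext x; simp [mul_assoc]
  smul_zero a := by ext x; simp
  smul_add a q q' := by ext x; simp
  add_smul a b q := by ext x; simp [mul_add]
  zero_smul q := by ext x; simp

end QA

end Duality

section KTheory

variable (k : Type) [Field k] [Algebra k A]

/-- multiplication by a central scalar, as an A-linear endomorphism -/
def centralSmul {W : Type} [AddCommGroup W] [Module A W] (c : k) : W →ₗ[A] W where
  toFun w := algebraMap k A c • w
  map_add' w w' := smul_add (algebraMap k A c) w w'
  map_smul' a w := by
    show algebraMap k A c • a • w = a • (algebraMap k A c • w)
    calc algebraMap k A c • a • w = (algebraMap k A c * a) • w := (mul_smul _ _ w).symm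
      _ = (a * algebraMap k A c) • w := by rw [Algebra.commutes]
      _ = a • algebraMap k A c • w := mul_smul _ _ w

@[simp] lemma centralSmul_apply {W : Type} [AddCommGroup W] [Module A W] (c : k) (w : W) :
    (centralSmul k c : W →ₗ[A] W) w = algebraMap k A c • w := rfl

theorem fdOfInSub [FiniteDimensional k A] {V : Type} [AddCommGroup V] [Module A V]
    (hV : InSub A V) :
    @FiniteDimensional k V _ _ (Module.compHom V (algebraMap k A)) := by
  letI : Module k V := Module.compHom V (algebraMap k A)
  obtain ⟨n, j, hj⟩ := hV
  let jk : V →ₗ[k] (Fin n → A) :=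
    { toFun := j
      map_add' := j.map_add
      map_smul' := fun c v => by
        show j (algebraMap k A c • v) = c • j v
        rw [j.map_smul]
        funext i
        rw [Pi.smul_apply, Pi.smul_apply, smul_eq_mul, Algebra.smul_def] }
  exact FiniteDimensional.of_injective jk hj

theorem homFinSpan [FiniteDimensional k A] {V W : Type} [AddCommGroup V] [Module A V]
    [AddCommGroup W] [Module A W]
    (hV : InSub A V) (hW : InSub A W) (P : (V →ₗ[A] W) → Prop)
    (hP0 : P 0) (hPadd : ∀ φ ψ, P φ → P ψ → P (φ + ψ))
    (hPsmul : ∀ (c : k) (φ), P φ → P (centralSmul k c ∘ₗ φ)) :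
    ∃ (N : ℕ) (b : Fin N → (V →ₗ[A] W)), (∀ i, P (b i)) ∧
      ∀ φ, P φ → ∃ c : Fin N → k, ∀ v, φ v = ∑ i, algebraMap k A (c i) • (b i) v := by
  classical
  letI : Module k V := Module.compHom V (algebraMap k A)
  letI : Module k W := Module.compHom W (algebraMap k A)
  haveI : FiniteDimensional k V := fdOfInSub k hV
  haveI : FiniteDimensional k W := fdOfInSub k hW
  let S : Submodule k (V →ₗ[k] W) :=
    { carrier := {ψ | ∃ φ : V →ₗ[A] W, P φ ∧ ∀ v, ψ v = φ v}
      add_mem' := by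
        rintro ψ₁ ψ₂ ⟨φ₁, h₁, e₁⟩ ⟨φ₂, h₂, e₂⟩
        exact ⟨φ₁ + φ₂, hPadd _ _ h₁ h₂, fun v => by
          rw [LinearMap.add_apply, LinearMap.add_apply, e₁ v, e₂ v]⟩
      zero_mem' := ⟨0, hP0, fun v => rfl⟩
      smul_mem' := by
        rintro c ψ ⟨φ, hφ, e⟩
        exact ⟨centralSmul k c ∘ₗ φ, hPsmul c φ hφ, fun v => by
          rw [LinearMap.smul_apply, e v]; rfl⟩ }
  let B := Module.finBasis k S
  refine ⟨Module.finrank k S, fun i => Classical.choose (B i).2,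
    fun i => (Classical.choose_spec (B i).2).1, ?_⟩
  intro φ hφ
  let ψ : V →ₗ[k] W :=
    { toFun := φ
      map_add' := φ.map_add
      map_smul' := fun c v => by
        show φ (algebraMap k A c • v) = c • φ v
        rw [φ.map_smul]; rfl }
  have hmem : ψ ∈ S := ⟨φ, hφ, fun v => rfl⟩
  have hsum := B.sum_repr ⟨ψ, hmem⟩
  refine ⟨fun i => B.repr ⟨ψ, hmem⟩ i, ?_⟩
  intro v
  have hcoe := congrArg (fun (t : S) => (t : V →ₗ[k] W) v) hsum
  simp only at hcoe
  have hL : ((↑(∑ i, B.repr ⟨ψ, hmem⟩ i • B i) : V →ₗ[k] W)) v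
      = ∑ i, B.repr ⟨ψ, hmem⟩ i • ((B i : V →ₗ[k] W) v) := by
    rw [Submodule.coe_sum, LinearMap.sum_apply]
    refine Finset.sum_congr rfl fun i _ => ?_
    rw [SetLike.val_smul, LinearMap.smul_apply]
  have hφv : φ v = ∑ i, B.repr ⟨ψ, hmem⟩ i • ((B i : V →ₗ[k] W) v) := by
    rw [← hL, hcoe]; rfl
  rw [hφv]
  refine Finset.sum_congr rfl fun i _ => ?_
  have hbi := (Classical.choose_spec (B i).2).2
  rw [hbi v]
  rfl

/-- package an additive map with the central-scalar property into a map to QA -/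
def mkG {V : Type} [AddCommGroup V] [Module A V] (lam : V →+ k)
    (hsm : ∀ (c : k) (u : V), lam (algebraMap k A c • u) = c * lam u) :
    V →ₗ[A] QA k A where
  toFun u := ⟨{ toFun := fun a => lam (a • u)
                map_add' := fun a a' => by
                  show lam ((a + a') • u) = lam (a • u) + lam (a' • u)
                  rw [add_smul, lam.map_add]
                map_smul' := fun c a => by
                  show lam ((c • a) • u) = c • lam (a • u)
                  rw [Algebra.smul_def, mul_smul, hsm, smul_eq_mul] }⟩
  map_add' u u' := by
    ext a
    show lam (a • (u + u')) = lam (a • u) + lam (a • u')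
    rw [smul_add, lam.map_add]
  map_smul' b u := by
    ext a
    show lam (a • b • u) = lam ((a * b) • u)
    rw [mul_smul]

@[simp] lemma mkG_apply {V : Type} [AddCommGroup V] [Module A V] (lam : V →+ k)
    (hsm : ∀ (c : k) (u : V), lam (algebraMap k A c • u) = c * lam u) (u : V) (a : A) :
    ((mkG k lam hsm) u).f a = lam (a • u) := rfl

theorem qaSep {V : Type} [AddCommGroup V] [Module A V] (v : V)
    (h : ∀ G : V →ₗ[A] QA k A, G v = 0) : v = 0 := by
  by_contra hv
  letI : Module k V := Module.compHom V (algebraMap k A)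
  let j : k →ₗ[k] V :=
    { toFun := fun c => algebraMap k A c • v
      map_add' := fun c c' => by
        show algebraMap k A (c + c') • v = algebraMap k A c • v + algebraMap k A c' • v
        rw [map_add, add_smul]
      map_smul' := fun c c' => by
        show algebraMap k A (c * c') • v = c • (algebraMap k A c' • v)
        rw [map_mul, mul_smul]; rfl }
  have hjker : LinearMap.ker j = ⊥ := by
    rw [LinearMap.ker_eq_bot']
    intro c hc
    by_contra hc0
    apply hv
    have hinv : algebraMap k A c⁻¹ • (algebraMap k A c • v) = v := by
      rw [smul_smul, ← map_mul, inv_mul_cancel₀ hc0, map_one, one_smul]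
    have hj0 : algebraMap k A c • v = 0 := hc
    rw [← hinv, hj0, smul_zero]
  obtain ⟨r, hr⟩ := j.exists_leftInverse_of_injective hjker
  have hrv : r v = 1 := by
    have h1 := congrArg (fun (t : k →ₗ[k] k) => t 1) hr
    simp only [LinearMap.comp_apply, LinearMap.id_apply] at h1
    have hj1 : j 1 = v := by
      show algebraMap k A 1 • v = v
      rw [map_one, one_smul]
    rw [← hj1]
    exact h1
  have hsm : ∀ (c : k) (u : V), r.toAddMonoidHom (algebraMap k A c • u) = c * r u := by
    intro c u
    show r (algebraMap k A c • u) = c * r u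
    have hcu : algebraMap k A c • u = c • u := rfl
    rw [hcu, r.map_smul, smul_eq_mul]
  have hzero := h (mkG k r.toAddMonoidHom hsm)
  have h1 := congrArg (fun q : QA k A => q.f 1) hzero
  simp only [mkG_apply, one_smul, QA.zero_f, LinearMap.zero_apply] at h1
  change r.toAddMonoidHom ((1 : A) • v) = 0 at h1
  rw [one_smul] at h1
  change r v = 0 at h1
  rw [hrv] at h1
  exact one_ne_zero h1

theorem qaExt {V W : Type} [AddCommGroup V] [Module A V] [AddCommGroup W] [Module A W]
    (f : V →ₗ[A] W) (hf : Function.Injective f) (ζ : V →ₗ[A] QA k A) :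
    ∃ η : W →ₗ[A] QA k A, ∀ v, η (f v) = ζ v := by
  letI : Module k V := Module.compHom V (algebraMap k A)
  letI : Module k W := Module.compHom W (algebraMap k A)
  let fk : V →ₗ[k] W :=
    { toFun := f
      map_add' := f.map_add
      map_smul' := fun c v => by
        show f (algebraMap k A c • v) = c • f v
        rw [f.map_smul]; rfl }
  have hfkker : LinearMap.ker fk = ⊥ := by
    rw [LinearMap.ker_eq_bot']
    intro v hvk
    have : f v = 0 := hvk
    apply hf
    rw [this, map_zero]
  obtain ⟨r, hr⟩ := fk.exists_leftInverse_of_injective hfkker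
  let gh : V →ₗ[k] k :=
    { toFun := fun v => (ζ v).f 1
      map_add' := fun v v' => by
        show (ζ (v + v')).f 1 = (ζ v).f 1 + (ζ v').f 1
        rw [ζ.map_add]; rfl
      map_smul' := fun c v => by
        show (ζ (algebraMap k A c • v)).f 1 = c • (ζ v).f 1
        rw [ζ.map_smul]
        show (ζ v).f (1 * algebraMap k A c) = c • (ζ v).f 1
        rw [one_mul, Algebra.algebraMap_eq_smul_one, (ζ v).f.map_smul] }
  let lam : W →ₗ[k] k := gh ∘ₗ r
  have hsm : ∀ (c : k) (u : W), lam.toAddMonoidHom (algebraMap k A c • u) = c * lam u := by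
    intro c u
    show lam (algebraMap k A c • u) = c * lam u
    have hcu : algebraMap k A c • u = c • u := rfl
    rw [hcu, lam.map_smul, smul_eq_mul]
  refine ⟨mkG k lam.toAddMonoidHom hsm, ?_⟩
  intro v
  ext a
  show lam (a • f v) = (ζ v).f a
  have h1 : a • f v = f (a • v) := (f.map_smul a v).symm
  have h2 : r (fk (a • v)) = a • v := by
    have := congrArg (fun (t : V →ₗ[k] V) => t (a • v)) hr
    simpa using this
  have h3 : f (a • v) = fk (a • v) := rfl
  rw [h1, h3]
  show gh (r (fk (a • v))) = (ζ v).f a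
  rw [h2]
  show (ζ (a • v)).f 1 = (ζ v).f a
  rw [ζ.map_smul]
  show (ζ v).f (1 * a) = (ζ v).f a
  rw [one_mul]

end KTheory

section Pi

variable (k : Type) [Field k] [Algebra k A]

lemma qa_smul_f (c : k) (g0 : A →ₗ[k] k) :
    (algebraMap k A c • (⟨g0⟩ : QA k A)).f = c • g0 := by
  refine LinearMap.ext fun x => ?_
  show g0 (x * algebraMap k A c) = c • g0 x
  rw [← Algebra.commutes, ← Algebra.smul_def, g0.map_smul]

theorem exists_pi [FiniteDimensional k A] :
    ∃ (t : ℕ) (π : (Fin t → A) →ₗ[A] QA k A), Function.Surjective π := by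
  classical
  let B := Module.finBasis k (A →ₗ[k] k)
  refine ⟨Module.finrank k (A →ₗ[k] k),
    ∑ i, LinearMap.toSpanSingleton A (QA k A) ⟨B i⟩ ∘ₗ LinearMap.proj i, ?_⟩
  intro q
  refine ⟨fun i => algebraMap k A (B.repr q.f i), ?_⟩
  apply QA.ext
  have happ : (∑ i, LinearMap.toSpanSingleton A (QA k A) ⟨B i⟩ ∘ₗ LinearMap.proj i)
      (fun i => algebraMap k A (B.repr q.f i))
      = ∑ i, algebraMap k A (B.repr q.f i) • (⟨B i⟩ : QA k A) := by
    rw [LinearMap.sum_apply]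
    exact Finset.sum_congr rfl fun i _ => rfl
  rw [happ]
  let fHom : QA k A →+ (A →ₗ[k] k) :=
    { toFun := QA.f, map_zero' := rfl, map_add' := fun _ _ => rfl }
  have hf : (∑ i, algebraMap k A (B.repr q.f i) • (⟨B i⟩ : QA k A)).f
      = ∑ i, (algebraMap k A (B.repr q.f i) • (⟨B i⟩ : QA k A)).f :=
    map_sum fHom _ _
  rw [hf]
  have hterm : ∀ i, (algebraMap k A (B.repr q.f i) • (⟨B i⟩ : QA k A)).f
      = B.repr q.f i • B i := fun i => qa_smul_f k _ _
  rw [Finset.sum_congr rfl fun i _ => hterm i]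
  exact B.sum_repr q.f

lemma pi_sum_single_one {m : ℕ} (v : Fin m → A) :
    (∑ j, v j • (Pi.single j 1 : Fin m → A)) = v := by
  classical
  funext l
  rw [Finset.sum_apply]
  have : ∀ j, (v j • (Pi.single j 1 : Fin m → A)) l = if l = j then v j else 0 := by
    intro j
    rw [Pi.smul_apply, smul_eq_mul, Pi.single_apply]
    by_cases h : l = j <;> simp [h]
  rw [Finset.sum_congr rfl fun j _ => this j]
  simp

theorem ext1Zero_ker_pi [FiniteDimensional k A] {M : Type} [AddCommGroup M] [Module A M]
    (hsm : InSub A M) {t : ℕ} (π : (Fin t → A) →ₗ[A] QA k A) (hπ : Function.Surjective π)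
    (hE : Ext1Zero A M (Fin t → A)) : Ext1Zero A M (LinearMap.ker π) := by
  classical
  intro E _ _ f g hf hg hfg
  set p : (LinearMap.ker π) →ₗ[A] ((Fin t → A) × E) :=
    (LinearMap.ker π).subtype.prod (-f) with hp
  set T : Submodule A ((Fin t → A) × E) := LinearMap.range p with hT
  set j₁ : (Fin t → A) →ₗ[A] (((Fin t → A) × E) ⧸ T) :=
    T.mkQ ∘ₗ LinearMap.inl A (Fin t → A) E with hj₁
  set j₂ : E →ₗ[A] (((Fin t → A) × E) ⧸ T) :=
    T.mkQ ∘ₗ LinearMap.inr A (Fin t → A) E with hj₂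
  have hTle : T ≤ LinearMap.ker (g ∘ₗ LinearMap.snd A (Fin t → A) E) := by
    rintro ⟨w, e⟩ ⟨y, hy⟩
    have h1 : -f y = e := congrArg Prod.snd hy
    have h2 : g (f y) = 0 := LinearMap.mem_ker.mp (hfg ▸ LinearMap.mem_range_self f y)
    simp only [LinearMap.mem_ker, LinearMap.comp_apply, LinearMap.snd_apply]
    rw [← h1, map_neg, h2, neg_zero]
  set gbar : (((Fin t → A) × E) ⧸ T) →ₗ[A] M :=
    T.liftQ (g ∘ₗ LinearMap.snd A (Fin t → A) E) hTle with hgbar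
  have hj₁_inj : Function.Injective j₁ := by
    intro w w' hww
    have hww' : T.mkQ ((w : Fin t → A), (0 : E)) = T.mkQ (w', 0) := hww
    have hmm : ((w : Fin t → A), (0 : E)) - (w', 0) ∈ T := sub_mem_of_mkQ_eq hww'
    obtain ⟨y, hy⟩ := hmm
    have h1 : -f y = 0 - 0 := congrArg Prod.snd hy
    have hy0 : y = 0 := hf (by simpa using h1)
    have h2 : (y : Fin t → A) = w - w' := congrArg Prod.fst hy
    rw [hy0] at h2
    have : w - w' = 0 := by simpa using h2.symm
    exact sub_eq_zero.mp this
  have hgbar_surj : Function.Surjective gbar := by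
    intro x
    obtain ⟨e, he⟩ := hg x
    exact ⟨T.mkQ (0, e), by simpa [hgbar] using he⟩
  have hrange : LinearMap.range j₁ = LinearMap.ker gbar := by
    ext q
    induction q using Submodule.Quotient.induction_on with
    | H we =>
      obtain ⟨w, e⟩ := we
      constructor
      · rintro ⟨w', hw'⟩
        have hww' : T.mkQ ((w' : Fin t → A), (0 : E)) = T.mkQ (w, e) := hw'
        obtain ⟨y, hy⟩ := sub_mem_of_mkQ_eq hww'
        have hsnd : -f y = 0 - e := congrArg Prod.snd hy
        have hfe : e = f y := by
          have := hsnd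
          simp only [zero_sub] at this
          exact (neg_injective this).symm
        have hge : g e = 0 := by
          rw [hfe]
          exact LinearMap.mem_ker.mp (hfg ▸ LinearMap.mem_range_self f y)
        show gbar (Submodule.Quotient.mk (w, e)) = 0
        simpa [hgbar] using hge
      · intro hker
        have hge : g e = 0 := by simpa [hgbar] using hker
        obtain ⟨y, hy⟩ : e ∈ LinearMap.range f := hfg ▸ hge
        refine ⟨w + (y : Fin t → A), ?_⟩
        show T.mkQ (w + (y : Fin t → A), (0 : E)) = Submodule.Quotient.mk (w, e)
        have hstep : T.mkQ (w + (y : Fin t → A), (0 : E)) = T.mkQ (w, e) := by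
          refine mkQ_eq ⟨y, ?_⟩
          have hdiff : (w + (y : Fin t → A), (0 : E)) - (w, e) = ((y : Fin t → A), -e) := by
            rw [Prod.mk_sub_mk]
            simp
          rw [hdiff, ← hy]
          rfl
        simpa using hstep
  obtain ⟨σ, hσ⟩ := hE (((Fin t → A) × E) ⧸ T) j₁ gbar hj₁_inj hgbar_surj hrange
  have hTle2 : T ≤ LinearMap.ker (π ∘ₗ LinearMap.fst A (Fin t → A) E) := by
    rintro ⟨w, e⟩ ⟨y, hy⟩
    have h1 : (y : Fin t → A) = w := congrArg Prod.fst hy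
    simp only [LinearMap.mem_ker, LinearMap.comp_apply, LinearMap.fst_apply]
    rw [← h1]
    exact y.2
  set qbar : (((Fin t → A) × E) ⧸ T) →ₗ[A] QA k A :=
    T.liftQ (π ∘ₗ LinearMap.fst A (Fin t → A) E) hTle2 with hqbar
  obtain ⟨m, iM, hiM⟩ := hsm
  obtain ⟨η, hη⟩ := qaExt k iM hiM (qbar ∘ₗ σ)
  choose bb hbb using fun j : Fin m => hπ (η ((Pi.single j 1 : Fin m → A)))
  set ηt : (Fin m → A) →ₗ[A] (Fin t → A) :=
    ∑ j, LinearMap.toSpanSingleton A (Fin t → A) (bb j) ∘ₗ LinearMap.proj j with hηt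
  have hπηt : ∀ w, π (ηt w) = η w := by
    intro w
    have h1 : ηt w = ∑ j, w j • bb j := by
      rw [hηt, LinearMap.sum_apply]
      exact Finset.sum_congr rfl fun j _ => rfl
    rw [h1, map_sum]
    have h2 : ∀ j, π (w j • bb j) = w j • η ((Pi.single j 1 : Fin m → A)) := by
      intro j
      rw [map_smul, hbb j]
    rw [Finset.sum_congr rfl fun j _ => h2 j]
    have h3 : ∀ j, w j • η ((Pi.single j 1 : Fin m → A)) = η (w j • (Pi.single j 1 : Fin m → A)) := by
      intro j
      rw [map_smul]
    rw [Finset.sum_congr rfl fun j _ => h3 j, ← map_sum, pi_sum_single_one]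
  set τ : M →ₗ[A] (Fin t → A) := ηt ∘ₗ iM with hτ
  set σ' : M →ₗ[A] (((Fin t → A) × E) ⧸ T) := σ - j₁ ∘ₗ τ with hσ'
  have hgj₁ : ∀ w, gbar (j₁ w) = 0 := by
    intro w
    show gbar (T.mkQ (w, 0)) = 0
    simp [hgbar]
  have hgσ'x : ∀ x, gbar (σ' x) = x := by
    intro x
    have h1 : gbar (σ x) = x := by
      have := congrArg (fun (u : M →ₗ[A] M) => u x) hσ
      simpa using this
    rw [hσ']
    simp only [LinearMap.sub_apply, LinearMap.comp_apply, map_sub]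
    rw [h1, hgj₁, sub_zero]
  have hqj₁ : ∀ w, qbar (j₁ w) = π w := by
    intro w
    show qbar (T.mkQ (w, 0)) = π w
    simp [hqbar]
  have hqσ' : ∀ x, qbar (σ' x) = 0 := by
    intro x
    rw [hσ']
    simp only [LinearMap.sub_apply, LinearMap.comp_apply, map_sub]
    rw [hqj₁]
    have h1 : τ x = ηt (iM x) := rfl
    rw [h1, hπηt, hη]
    simp
  have hj₂_inj : Function.Injective j₂ := by
    intro e e' hee
    have hee' : T.mkQ ((0 : Fin t → A), e) = T.mkQ (0, e') := hee
    obtain ⟨y, hy⟩ := sub_mem_of_mkQ_eq hee'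
    have h1 : (y : Fin t → A) = 0 - 0 := congrArg Prod.fst hy
    have hy0 : y = 0 := by
      apply Subtype.ext
      simpa using h1
    have h2 : -f y = e - e' := congrArg Prod.snd hy
    rw [hy0] at h2
    simp only [map_zero, neg_zero] at h2
    exact sub_eq_zero.mp h2.symm
  have hmem : ∀ x, σ' x ∈ LinearMap.range j₂ := by
    intro x
    obtain ⟨⟨w, e⟩, hwe⟩ := Submodule.mkQ_surjective T (σ' x)
    have hq := hqσ' x
    rw [← hwe] at hq
    have hw : π w = 0 := by simpa [hqbar] using hq
    refine ⟨e + f ⟨w, hw⟩, ?_⟩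
    rw [← hwe]
    show T.mkQ ((0 : Fin t → A), e + f ⟨w, hw⟩) = T.mkQ (w, e)
    refine mkQ_eq ⟨-⟨w, hw⟩, ?_⟩
    have hdiff : ((0 : Fin t → A), e + f ⟨w, hw⟩) - (w, e) = (-w, f ⟨w, hw⟩) := by
      rw [Prod.mk_sub_mk]
      simp
    rw [hdiff]
    have hpneg : p (-(⟨w, hw⟩ : LinearMap.ker π)) = (-w, f ⟨w, hw⟩) := by
      simp [hp, Prod.ext_iff]
    exact hpneg
  refine ⟨invComp j₂ hj₂_inj σ' hmem, ?_⟩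
  refine LinearMap.ext fun x => ?_
  have h1 : j₂ (invComp j₂ hj₂_inj σ' hmem x) = σ' x := invComp_spec _ _ _ _ x
  have h2 : gbar (j₂ (invComp j₂ hj₂_inj σ' hmem x)) = g (invComp j₂ hj₂_inj σ' hmem x) := by
    show gbar (T.mkQ (0, _)) = _
    simp [hgbar]
  simp only [LinearMap.comp_apply, LinearMap.id_apply]
  rw [← h2, h1, hgσ'x]

end Pi

end EvalIso


theorem evaluation_is_isomorphism
    (k : Type) [Field k] (A : Type) [Ring A] [Algebra k A] [FiniteDimensional k A]
    (hid : InjDimLE1 A)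
    (M : Type) [AddCommGroup M] [Module A M] (hM : IsClusterTilting A M)
    (X : Type) [AddCommGroup X] [Module A X] (hX : InSub A X) :
    Function.Bijective (evMap A M X) := by
  classical
  obtain ⟨hsm, hct⟩ := hM
  have hInSubA : InSub A A :=
    ⟨1, LinearMap.pi (fun _ => LinearMap.id), fun a b hab => by simpa using congrFun hab 0⟩
  have hEAM : Ext1Zero A A M := EvalIso.ext1Zero_free
  have haddA : InAdd A M A := ((hct A hInSubA).2).mp hEAM
  have hInAddMM : InAdd A M M :=
    ⟨1, LinearMap.pi (fun _ => LinearMap.id), LinearMap.proj 0, rfl⟩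
  have hEMM : Ext1Zero A M M := ((hct M hsm).1).mpr hInAddMM
  obtain ⟨nA, sA, rA, hrsA⟩ := haddA
  have hrsA' : ∀ a : A, rA (sA a) = a := by
    intro a
    have := congrArg (fun (u : A →ₗ[A] A) => u a) hrsA
    simpa using this
  obtain ⟨mX, jX, hjX⟩ := hX
  have sepM : ∀ u : X, (∀ φ : X →ₗ[A] M, φ u = 0) → u = 0 := by
    intro u hu
    have hj0 : jX u = 0 := by
      funext i
      have h2 : sA (jX u i) = 0 := by
        funext c
        exact hu (LinearMap.proj c ∘ₗ sA ∘ₗ LinearMap.proj i ∘ₗ jX)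
      have h3 := congrArg rA h2
      rw [hrsA' (jX u i), map_zero] at h3
      exact h3
    have : jX u = jX 0 := by rw [hj0, map_zero]
    exact hjX this
  constructor
  · intro x₁ x₂ hx
    have hφ : ∀ φ : X →ₗ[A] M, φ (x₁ - x₂) = 0 := by
      intro φ
      have h1 : φ x₁ = φ x₂ := LinearMap.congr_fun hx φ
      rw [map_sub, h1, sub_self]
    exact sub_eq_zero.mp (sepM _ hφ)
  · intro α
    obtain ⟨N, b, -, hspan⟩ := EvalIso.homFinSpan k (A := A) ⟨mX, jX, hjX⟩ hsm
      (fun _ => True) trivial (fun _ _ _ _ => trivial) (fun _ _ _ => trivial)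
    set ι : X →ₗ[A] (Fin N → M) := LinearMap.pi b with hιdef
    have hEP : ∀ φ : X →ₗ[A] M, ∃ Ψ : (Fin N → M) →ₗ[A] M, Ψ ∘ₗ ι = φ := by
      intro φ
      obtain ⟨c, hc⟩ := hspan φ trivial
      refine ⟨∑ i, EvalIso.centralSmul k (c i) ∘ₗ LinearMap.proj i, ?_⟩
      refine LinearMap.ext fun x => ?_
      rw [LinearMap.comp_apply, LinearMap.sum_apply]
      have h1 : ∀ i, (EvalIso.centralSmul k (c i) ∘ₗ LinearMap.proj i) (ι x)
          = algebraMap k A (c i) • b i x := fun i => rfl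
      rw [Finset.sum_congr rfl (fun i _ => h1 i)]
      exact (hc x).symm
    have hEPM : Ext1Zero A (Fin N → M) M := EvalIso.ext1Zero_pi_left N hEMM
    have hECM : Ext1Zero A ((Fin N → M) ⧸ LinearMap.range ι) M :=
      EvalIso.ext1Zero_quot ι hEP hEPM
    obtain ⟨t, π, hπ⟩ := EvalIso.exists_pi k (A := A)
    have hEMA : Ext1Zero A M A := EvalIso.ext1Zero_of_inAdd hEMM ⟨nA, sA, rA, hrsA⟩
    have hEMtA : Ext1Zero A M (Fin t → A) := EvalIso.ext1Zero_pi_right t hEMA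
    have hEMK : Ext1Zero A M (LinearMap.ker π) := EvalIso.ext1Zero_ker_pi k hsm π hπ hEMtA
    have hInSubK : InSub A (LinearMap.ker π) :=
      ⟨t, (LinearMap.ker π).subtype, Subtype.val_injective⟩
    have haddK : InAdd A M (LinearMap.ker π) := ((hct _ hInSubK).1).mp hEMK
    have hECK : Ext1Zero A ((Fin N → M) ⧸ LinearMap.range ι) (LinearMap.ker π) :=
      EvalIso.ext1Zero_of_inAdd hECM haddK
    have hclose : ∀ y : Fin N → M,
        (∀ ψ : (Fin N → M) →ₗ[A] M, ψ ∘ₗ ι = 0 → ψ y = 0) → y ∈ LinearMap.range ι := by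
      intro y hy
      have h1 : ∀ ψb : ((Fin N → M) ⧸ LinearMap.range ι) →ₗ[A] M,
          ψb ((LinearMap.range ι).mkQ y) = 0 := by
        intro ψb
        refine hy (ψb ∘ₗ (LinearMap.range ι).mkQ) ?_
        refine LinearMap.ext fun x => ?_
        have h0 : (LinearMap.range ι).mkQ (ι x) = 0 :=
          (Submodule.Quotient.mk_eq_zero _).mpr ⟨x, rfl⟩
        rw [LinearMap.comp_apply, LinearMap.comp_apply, h0, map_zero]
        rfl
      have h2 : ∀ G : ((Fin N → M) ⧸ LinearMap.range ι) →ₗ[A] EvalIso.QA k A,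
          G ((LinearMap.range ι).mkQ y) = 0 := by
        intro G
        obtain ⟨hmap, hcomp⟩ := EvalIso.ext1Zero_lift π hπ hECK G
        have hcoord : ∀ l, hmap ((LinearMap.range ι).mkQ y) l = 0 := by
          intro l
          have h2s : sA (hmap ((LinearMap.range ι).mkQ y) l) = 0 := by
            funext cc
            exact h1 (LinearMap.proj cc ∘ₗ sA ∘ₗ LinearMap.proj l ∘ₗ hmap)
          have h3 := congrArg rA h2s
          rw [hrsA' (hmap ((LinearMap.range ι).mkQ y) l), map_zero] at h3
          exact h3
        have hmw : hmap ((LinearMap.range ι).mkQ y) = 0 := funext hcoord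
        have h4 : π (hmap ((LinearMap.range ι).mkQ y)) = G ((LinearMap.range ι).mkQ y) :=
          LinearMap.congr_fun hcomp _
        rw [← h4, hmw, map_zero]
      have hz := EvalIso.qaSep k ((LinearMap.range ι).mkQ y) h2
      exact (Submodule.Quotient.mk_eq_zero _).mp hz
    set y : Fin N → M := fun i => α (b i) with hydef
    have claim1 : ∀ ψ : (Fin N → M) →ₗ[A] M, α (ψ ∘ₗ ι) = ψ y := by
      intro ψ
      have hdec : ψ ∘ₗ ι
          = ∑ i, (ψ ∘ₗ LinearMap.single A (fun _ => M) i : Module.End A M) • b i := by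
        refine LinearMap.ext fun x => ?_
        rw [LinearMap.comp_apply]
        have hx : ι x = ∑ i, Pi.single i (ι x i) := (Finset.univ_sum_single (ι x)).symm
        rw [hx, map_sum, LinearMap.sum_apply]
        exact Finset.sum_congr rfl fun i _ => rfl
      rw [hdec, map_sum]
      have hterm : ∀ i, α ((ψ ∘ₗ LinearMap.single A (fun _ => M) i : Module.End A M) • b i)
          = ψ (Pi.single i (y i)) := by
        intro i
        rw [α.map_smul]
        rfl
      rw [Finset.sum_congr rfl fun i _ => hterm i]
      have hsum : ∑ i, ψ (Pi.single i (y i)) = ψ (∑ i, Pi.single i (y i)) :=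
        (map_sum ψ _ _).symm
      rw [hsum, Finset.univ_sum_single]
    have hymem : y ∈ LinearMap.range ι := by
      refine hclose y ?_
      intro ψ hψ0
      have hcl := claim1 ψ
      rw [hψ0, map_zero] at hcl
      exact hcl.symm
    obtain ⟨x, hx⟩ := hymem
    refine ⟨x, ?_⟩
    refine LinearMap.ext fun φ => ?_
    obtain ⟨Ψ, hΨ⟩ := hEP φ
    have h5 : α φ = Ψ y := by rw [← hΨ]; exact claim1 Ψ
    have h6 : Ψ (ι x) = φ x := LinearMap.congr_fun hΨ x
    show φ x = α φ
    rw [h5, ← hx]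
    exact h6.symm
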